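/- For invertible real n×n matrices A and B, the product of the k largest singular values of AB is at most the product of the k largest singular values of A times the product of the k largest singular values of B, for every k = 1,...,n (Horn inequality). -/

import Mathlib

open Matrix Filter

/-- The k-th largest singular value (0-indexed) of a real square matrix:
square roots of the eigenvalues of `Xᵀ * X`, sorted in decreasing order. -/
noncomputable def svalDesc {n : ℕ} (X : Matrix (Fin n) (Fin n) ℝ) (k : Fin n) : ℝ :=
  Real.sqrt (((show (Xᵀ * X).IsHermitian by
      simpa [Matrix.conjTranspose_eq_transpose_of_trivial] using
        Matrix.isHermitian_conjTranspose_mul_self X).eigenvalues ∘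
    Tuple.sort ((show (Xᵀ * X).IsHermitian by
      simpa [Matrix.conjTranspose_eq_transpose_of_trivial] using
        Matrix.isHermitian_conjTranspose_mul_self X).eigenvalues)) k.rev)

/-- Euclidean norm of the j-th column of X. -/
noncomputable def colNorm {n : ℕ} (X : Matrix (Fin n) (Fin n) ℝ) (j : Fin n) : ℝ :=
  Real.sqrt (∑ i, (X i j) ^ 2)

section HornAux

variable {n : ℕ}

/-- sorted (increasing) eigenvalues of `Xᴴ * X`. -/
private noncomputable def muf (X : Matrix (Fin n) (Fin n) ℝ) : Fin n → ℝ :=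
  ((Matrix.isHermitian_conjTranspose_mul_self X).eigenvalues ∘
    Tuple.sort ((Matrix.isHermitian_conjTranspose_mul_self X).eigenvalues))

private lemma muf_monotone (X : Matrix (Fin n) (Fin n) ℝ) : Monotone (muf X) :=
  Tuple.monotone_sort _

private lemma muf_nonneg (X : Matrix (Fin n) (Fin n) ℝ) (i : Fin n) : 0 ≤ muf X i :=
  Matrix.eigenvalues_conjTranspose_mul_self_nonneg X _

/-- determinant expansion for Gram matrices. -/
private lemma detE {N m : ℕ} (A : Matrix (Fin N) (Fin m) ℝ) :
    det (Aᴴ * A) = ∑ g : Fin m → Fin N, (∏ q, A (g q) q) * det (A.submatrix g id) := by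
  have hC : ∀ g : Fin m → Fin N,
      det (A.submatrix g id) =
        ∑ σ : Equiv.Perm (Fin m), ((Equiv.Perm.sign σ : ℤ) : ℝ) * ∏ q, A (g q) (σ q) := by
    intro g
    rw [← Matrix.det_transpose, Matrix.det_apply']
    simp [Matrix.transpose_apply]
  have hexp : ∀ σ : Equiv.Perm (Fin m), ∏ q, (Aᴴ * A) (σ q) q
      = ∑ g : Fin m → Fin N, ∏ q, (A (g q) (σ q) * A (g q) q) := by
    intro σ
    simp only [Matrix.mul_apply, Matrix.conjTranspose_apply, star_trivial]
    rw [Finset.prod_univ_sum, Fintype.piFinset_univ]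
  rw [Matrix.det_apply']
  calc ∑ σ : Equiv.Perm (Fin m), ((Equiv.Perm.sign σ : ℤ) : ℝ) * ∏ q, (Aᴴ * A) (σ q) q
      = ∑ σ : Equiv.Perm (Fin m), ∑ g : Fin m → Fin N,
          (∏ q, A (g q) q) * (((Equiv.Perm.sign σ : ℤ) : ℝ) * ∏ q, A (g q) (σ q)) := by
        apply Finset.sum_congr rfl
        intro σ _
        rw [hexp σ, Finset.mul_sum]
        apply Finset.sum_congr rfl
        intro g _
        rw [Finset.prod_mul_distrib]
        ring
    _ = ∑ g : Fin m → Fin N, ∑ σ : Equiv.Perm (Fin m),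
          (∏ q, A (g q) q) * (((Equiv.Perm.sign σ : ℤ) : ℝ) * ∏ q, A (g q) (σ q)) :=
        Finset.sum_comm
    _ = ∑ g : Fin m → Fin N, (∏ q, A (g q) q) * det (A.submatrix g id) := by
        apply Finset.sum_congr rfl
        intro g _
        rw [hC g, Finset.mul_sum]

/-- Symmetrized Cauchy–Binet for Gram matrices. -/
private lemma detCB {N m : ℕ} (A : Matrix (Fin N) (Fin m) ℝ) :
    (m.factorial : ℝ) * det (Aᴴ * A) = ∑ g : Fin m → Fin N, det (A.submatrix g id) ^ 2 := by
  have hdet : ∀ g : Fin m → Fin N,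
      det (A.submatrix g id) =
        ∑ σ : Equiv.Perm (Fin m), ((Equiv.Perm.sign σ : ℤ) : ℝ) * ∏ q, A (g q) (σ q) := by
    intro g
    rw [← Matrix.det_transpose, Matrix.det_apply']
    simp [Matrix.transpose_apply]
  have key : (m.factorial : ℝ) * det (Aᴴ * A)
      = ∑ σ : Equiv.Perm (Fin m), ∑ g : Fin m → Fin N,
          (∏ q, A (g q) q) * det (A.submatrix g id) := by
    rw [Finset.sum_const, ← detE A]
    simp [Fintype.card_perm, nsmul_eq_mul]
  -- reindex the inner sum by `g ↦ g ∘ σ`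
  have reidx : ∀ σ : Equiv.Perm (Fin m),
      (∑ g : Fin m → Fin N, (∏ q, A (g q) q) * det (A.submatrix g id))
        = ∑ g : Fin m → Fin N, (∏ q, A (g (σ q)) q) * det (A.submatrix (g ∘ σ) id) := by
    intro σ
    exact Fintype.sum_equiv (Equiv.arrowCongr σ (Equiv.refl (Fin N))) _ _
      (fun g => by simp [Equiv.arrowCongr, Function.comp_def])
  calc (m.factorial : ℝ) * det (Aᴴ * A)
      = ∑ σ : Equiv.Perm (Fin m), ∑ g : Fin m → Fin N,
          (∏ q, A (g (σ q)) q) * det (A.submatrix (g ∘ σ) id) := by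
        rw [key]; exact Finset.sum_congr rfl fun σ _ => by
          rw [← reidx σ]
    _ = ∑ g : Fin m → Fin N, ∑ σ : Equiv.Perm (Fin m),
          (∏ q, A (g (σ q)) q) * det (A.submatrix (g ∘ σ) id) := Finset.sum_comm
    _ = ∑ g : Fin m → Fin N, det (A.submatrix g id) ^ 2 := by
        apply Finset.sum_congr rfl
        intro g _
        have hsub : ∀ σ : Equiv.Perm (Fin m),
            A.submatrix (g ∘ σ) id = (A.submatrix g id).submatrix σ id := by
          intro σ; ext i j; simp
        calc ∑ σ : Equiv.Perm (Fin m), (∏ q, A (g (σ q)) q) * det (A.submatrix (g ∘ σ) id)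
            = ∑ σ : Equiv.Perm (Fin m),
                (((Equiv.Perm.sign σ : ℤ) : ℝ) * ∏ q, A (g (σ q)) q) * det (A.submatrix g id) := by
              apply Finset.sum_congr rfl
              intro σ _
              rw [hsub σ, Matrix.det_permute]
              ring
          _ = det (A.submatrix g id) ^ 2 := by
              rw [← Finset.sum_mul, sq]
              congr 1
              rw [Matrix.det_apply']
              apply Finset.sum_congr rfl
              intro σ _
              simp
  
/-- product over a finset is at most product over the top finset of the same size,
for a monotone nonnegative function. -/
private lemma prod_le_top {N : ℕ} {d : Fin N → ℝ} (hmono : Monotone d) (hpos : ∀ i, 0 ≤ d i)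
    (s : Finset (Fin N)) (c : Fin N) (hcard : s.card = (Finset.Ici c).card) :
    ∏ i ∈ s, d i ≤ ∏ i ∈ Finset.Ici c, d i := by
  set T := Finset.Ici c with hT
  have h1 : (∏ i ∈ s ∩ T, d i) * ∏ i ∈ s \ T, d i = ∏ i ∈ s, d i :=
    Finset.prod_inter_mul_prod_diff s T d
  have h2 : (∏ i ∈ T ∩ s, d i) * ∏ i ∈ T \ s, d i = ∏ i ∈ T, d i :=
    Finset.prod_inter_mul_prod_diff T s d
  have hcards : (s \ T).card = (T \ s).card := by
    have := Finset.card_sdiff_add_card_inter s T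
    have := Finset.card_sdiff_add_card_inter T s
    rw [Finset.inter_comm] at this
    omega
  have hd1 : ∏ i ∈ s \ T, d i ≤ d c ^ (s \ T).card := by
    rw [← Finset.prod_const]
    apply Finset.prod_le_prod (fun i _ => hpos i)
    intro i hi
    have : ¬ c ≤ i := by
      have := (Finset.mem_sdiff.mp hi).2
      simpa [hT] using this
    exact hmono (le_of_not_ge this)
  have hd2 : d c ^ (T \ s).card ≤ ∏ i ∈ T \ s, d i := by
    rw [← Finset.prod_const]
    apply Finset.prod_le_prod (fun i _ => hpos c)
    intro i hi
    exact hmono (by simpa [hT] using (Finset.mem_sdiff.mp hi).1)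
  calc ∏ i ∈ s, d i = (∏ i ∈ s ∩ T, d i) * ∏ i ∈ s \ T, d i := h1.symm
    _ ≤ (∏ i ∈ s ∩ T, d i) * ∏ i ∈ T \ s, d i := by
        apply mul_le_mul_of_nonneg_left _ (Finset.prod_nonneg fun i _ => hpos i)
        calc ∏ i ∈ s \ T, d i ≤ d c ^ (s \ T).card := hd1
          _ = d c ^ (T \ s).card := by rw [hcards]
          _ ≤ ∏ i ∈ T \ s, d i := hd2
    _ = ∏ i ∈ T, d i := by rw [Finset.inter_comm]; exact h2

/-- Spectral decomposition of `Xᴴ * X` with sorted eigenvalues. -/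
private lemma spectral' (X : Matrix (Fin n) (Fin n) ℝ) :
    ∃ U : Matrix (Fin n) (Fin n) ℝ, Uᴴ * U = 1 ∧ U * Uᴴ = 1 ∧
      Xᴴ * X = U * diagonal (muf X) * Uᴴ := by
  set hX := Matrix.isHermitian_conjTranspose_mul_self X
  set σ := Tuple.sort hX.eigenvalues
  set U0 : Matrix (Fin n) (Fin n) ℝ := (hX.eigenvectorUnitary : Matrix (Fin n) (Fin n) ℝ)
  have hU0l : U0ᴴ * U0 = 1 := (Matrix.mem_unitaryGroup_iff'.mp hX.eigenvectorUnitary.2)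
  have hU0r : U0 * U0ᴴ = 1 := (Matrix.mem_unitaryGroup_iff.mp hX.eigenvectorUnitary.2)
  have hspec : Xᴴ * X = U0 * diagonal hX.eigenvalues * U0ᴴ := by
    have := hX.spectral_theorem
    simpa [U0, Matrix.star_eq_conjTranspose] using this
  have entry : ∀ (U : Matrix (Fin n) (Fin n) ℝ) (d : Fin n → ℝ) (i j : Fin n),
      (U * diagonal d * Uᴴ) i j = ∑ a, U i a * d a * U j a := by
    intro U d i j
    rw [Matrix.mul_apply]
    apply Finset.sum_congr rfl
    intro a _
    rw [Matrix.mul_diagonal]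
    simp [Matrix.conjTranspose_apply]
  refine ⟨U0.submatrix id σ, ?_, ?_, ?_⟩
  · ext a b
    have h := Matrix.ext_iff.2 hU0l (σ a) (σ b)
    calc ((U0.submatrix id σ)ᴴ * U0.submatrix id σ) a b
        = (U0ᴴ * U0) (σ a) (σ b) := by
          simp [Matrix.mul_apply, Matrix.conjTranspose_apply]
      _ = (1 : Matrix (Fin n) (Fin n) ℝ) (σ a) (σ b) := h
      _ = (1 : Matrix (Fin n) (Fin n) ℝ) a b := by
          simp [Matrix.one_apply, σ.injective.eq_iff]
  · ext a b
    have h := Matrix.ext_iff.2 hU0r a b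
    calc (U0.submatrix id σ * (U0.submatrix id σ)ᴴ) a b
        = ∑ i, U0 a (σ i) * U0 b (σ i) := by
          simp [Matrix.mul_apply, Matrix.conjTranspose_apply]
      _ = ∑ k, U0 a k * U0 b k := Fintype.sum_equiv σ _ _ (fun i => rfl)
      _ = (1 : Matrix (Fin n) (Fin n) ℝ) a b := by
          rw [← h]; simp [Matrix.mul_apply, Matrix.conjTranspose_apply]
  · rw [hspec]
    ext i j
    rw [entry, entry]
    exact (Fintype.sum_equiv σ _ _ (fun a => rfl)).symm

/-- Key bound: for `V` with orthonormal columns, `det (Vᴴ D V)` is at most the product of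
the largest `m` diagonal entries. -/
private lemma diag_bound {N m : ℕ} {d : Fin N → ℝ} (hmono : Monotone d) (hpos : ∀ i, 0 ≤ d i)
    (V : Matrix (Fin N) (Fin m) ℝ) (hV : Vᴴ * V = 1) (c : Fin N)
    (hcard : (Finset.Ici c).card = m) :
    det (Vᴴ * diagonal d * V) ≤ ∏ i ∈ Finset.Ici c, d i := by
  set W : Matrix (Fin N) (Fin m) ℝ := diagonal (fun i => Real.sqrt (d i)) * V with hW
  have hWW : Wᴴ * W = Vᴴ * diagonal d * V := by
    rw [hW, Matrix.conjTranspose_mul]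
    have hdiagH : (diagonal (fun i => Real.sqrt (d i)))ᴴ = diagonal (fun i => Real.sqrt (d i)) := by
      simp [Matrix.diagonal_conjTranspose]
    rw [hdiagH]
    calc Vᴴ * diagonal (fun i => Real.sqrt (d i)) * (diagonal (fun i => Real.sqrt (d i)) * V)
        = Vᴴ * (diagonal (fun i => Real.sqrt (d i)) * diagonal (fun i => Real.sqrt (d i))) * V := by
          rw [← Matrix.mul_assoc, Matrix.mul_assoc Vᴴ]
      _ = Vᴴ * diagonal d * V := by
          rw [Matrix.diagonal_mul_diagonal]
          have : (fun i => Real.sqrt (d i) * Real.sqrt (d i)) = d :=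
            funext fun i => Real.mul_self_sqrt (hpos i)
          rw [this]
  have hsub : ∀ g : Fin m → Fin N,
      W.submatrix g id = diagonal (fun q => Real.sqrt (d (g q))) * V.submatrix g id := by
    intro g
    ext a b
    simp [hW, Matrix.submatrix_apply, Matrix.diagonal_mul]
  have hterm : ∀ g : Fin m → Fin N,
      det (W.submatrix g id) ^ 2 = (∏ q, d (g q)) * det (V.submatrix g id) ^ 2 := by
    intro g
    rw [hsub g, Matrix.det_mul, Matrix.det_diagonal, mul_pow, ← Finset.prod_pow]
    congr 1
    apply Finset.prod_congr rfl
    intro q _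
    rw [Real.sq_sqrt (hpos (g q))]
  have hbound : ∀ g : Fin m → Fin N,
      (∏ q, d (g q)) * det (V.submatrix g id) ^ 2
        ≤ (∏ i ∈ Finset.Ici c, d i) * det (V.submatrix g id) ^ 2 := by
    intro g
    by_cases hinj : Function.Injective g
    · apply mul_le_mul_of_nonneg_right _ (sq_nonneg _)
      have himg : ∏ q, d (g q) = ∏ i ∈ Finset.univ.image g, d i :=
        (Finset.prod_image (fun a _ b _ h => hinj h)).symm
      rw [himg]
      apply prod_le_top hmono hpos
      rw [Finset.card_image_of_injective _ hinj, Finset.card_univ, Fintype.card_fin, hcard]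
    · have : det (V.submatrix g id) = 0 := by
        simp only [Function.Injective] at hinj
        push_neg at hinj
        obtain ⟨a, b, hab, hne⟩ := hinj
        apply Matrix.det_zero_of_row_eq hne
        ext j
        simp [Matrix.submatrix_apply, hab]
      rw [this]
      simp
  have hfact : (0:ℝ) < (m.factorial : ℝ) := by positivity
  have hmain : (m.factorial : ℝ) * det (Vᴴ * diagonal d * V)
      ≤ (m.factorial : ℝ) * ∏ i ∈ Finset.Ici c, d i := by
    rw [← hWW, detCB W]
    calc ∑ g : Fin m → Fin N, det (W.submatrix g id) ^ 2
        = ∑ g : Fin m → Fin N, (∏ q, d (g q)) * det (V.submatrix g id) ^ 2 :=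
          Finset.sum_congr rfl fun g _ => hterm g
      _ ≤ ∑ g : Fin m → Fin N, (∏ i ∈ Finset.Ici c, d i) * det (V.submatrix g id) ^ 2 :=
          Finset.sum_le_sum fun g _ => hbound g
      _ = (∏ i ∈ Finset.Ici c, d i) * ∑ g : Fin m → Fin N, det (V.submatrix g id) ^ 2 := by
          rw [Finset.mul_sum]
      _ = (∏ i ∈ Finset.Ici c, d i) * ((m.factorial : ℝ) * det (Vᴴ * V)) := by
          rw [detCB V]
      _ = (m.factorial : ℝ) * ∏ i ∈ Finset.Ici c, d i := by
          rw [hV, Matrix.det_one]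
          ring
  exact le_of_mul_le_mul_left hmain hfact

private lemma conj_bound {m : ℕ} (X : Matrix (Fin n) (Fin n) ℝ)
    (W : Matrix (Fin n) (Fin m) ℝ) (hW : Wᴴ * W = 1) (c : Fin n)
    (hcard : (Finset.Ici c).card = m) :
    det (Wᴴ * (Xᴴ * X) * W) ≤ ∏ i ∈ Finset.Ici c, muf X i := by
  obtain ⟨U, hUl, hUr, hspec⟩ := spectral' X
  set V : Matrix (Fin n) (Fin m) ℝ := Uᴴ * W with hV
  have hVV : Vᴴ * V = 1 := by
    rw [hV, Matrix.conjTranspose_mul, Matrix.conjTranspose_conjTranspose,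
      Matrix.mul_assoc, ← Matrix.mul_assoc U Uᴴ W, hUr, Matrix.one_mul, hW]
  have hconj : Wᴴ * (Xᴴ * X) * W = Vᴴ * diagonal (muf X) * V := by
    rw [hspec, hV, Matrix.conjTranspose_mul, Matrix.conjTranspose_conjTranspose]
    simp only [Matrix.mul_assoc]
  rw [hconj]
  exact diag_bound (muf_monotone X) (muf_nonneg X) V hVV c hcard

private lemma attain (X : Matrix (Fin n) (Fin n) ℝ) (m : ℕ) (c : Fin n)
    (hcard : (Finset.Ici c).card = m) :
    ∃ W : Matrix (Fin n) (Fin m) ℝ, Wᴴ * W = 1 ∧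
      det (Wᴴ * (Xᴴ * X) * W) = ∏ i ∈ Finset.Ici c, muf X i := by
  obtain ⟨U, hUl, hUr, hspec⟩ := spectral' X
  have hm : m = n - (c : ℕ) := by rw [← hcard, Fin.card_Ici]
  have hlt : ∀ a : Fin m, (c : ℕ) + (a : ℕ) < n := by
    intro a
    have h1 := a.isLt
    have h2 := c.isLt
    omega
  set e : Fin m → Fin n := fun a => ⟨(c : ℕ) + (a : ℕ), hlt a⟩ with he
  have he_inj : Function.Injective e := by
    intro a b h
    have := congrArg Fin.val h
    simp only [he] at this
    exact Fin.ext (by omega)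
  have hprod : ∀ f : Fin n → ℝ, ∏ a : Fin m, f (e a) = ∏ i ∈ Finset.Ici c, f i := by
    intro f
    apply Finset.prod_bij (fun (a : Fin m) (_ : a ∈ Finset.univ) => e a)
    · intro a _
      simp only [Finset.mem_Ici, he, Fin.le_def]
      omega
    · intro a _ b _ h
      exact he_inj h
    · intro b hb
      have hcb : (c : ℕ) ≤ (b : ℕ) := by
        have h : c ≤ b := Finset.mem_Ici.mp hb
        exact h
      have hblt := b.isLt
      refine ⟨⟨(b : ℕ) - (c : ℕ), by omega⟩, Finset.mem_univ _, ?_⟩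
      refine Fin.ext ?_
      show (c : ℕ) + ((b : ℕ) - (c : ℕ)) = (b : ℕ)
      omega
    · intro a _
      rfl
  set W : Matrix (Fin n) (Fin m) ℝ := U.submatrix id e with hWdef
  have hWU : Uᴴ * W = (1 : Matrix (Fin n) (Fin n) ℝ).submatrix id e := by
    ext i b
    calc (Uᴴ * W) i b = (Uᴴ * U) i (e b) := by
          simp [hWdef, Matrix.mul_apply]
      _ = (1 : Matrix (Fin n) (Fin n) ℝ).submatrix id e i b := by rw [hUl]; rfl
  have hWUT : Wᴴ * U = (1 : Matrix (Fin n) (Fin n) ℝ).submatrix e id := by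
    have := congrArg Matrix.conjTranspose hWU
    rw [Matrix.conjTranspose_mul, Matrix.conjTranspose_conjTranspose,
      Matrix.conjTranspose_submatrix] at this
    simpa [hWdef] using this
  refine ⟨W, ?_, ?_⟩
  · ext a b
    have h := Matrix.ext_iff.2 hUl (e a) (e b)
    calc (Wᴴ * W) a b = (Uᴴ * U) (e a) (e b) := by
          simp [hWdef, Matrix.mul_apply, Matrix.conjTranspose_apply]
      _ = (1 : Matrix (Fin n) (Fin n) ℝ) (e a) (e b) := h
      _ = (1 : Matrix (Fin m) (Fin m) ℝ) a b := by
          simp [Matrix.one_apply, he_inj.eq_iff]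
  · have hdiag : Wᴴ * (Xᴴ * X) * W = diagonal (fun a => muf X (e a)) := by
      calc Wᴴ * (Xᴴ * X) * W = Wᴴ * (U * diagonal (muf X) * Uᴴ) * W := by rw [hspec]
        _ = (Wᴴ * U) * diagonal (muf X) * (Uᴴ * W) := by simp only [Matrix.mul_assoc]
        _ = (1 : Matrix (Fin n) (Fin n) ℝ).submatrix e id * diagonal (muf X)
              * (1 : Matrix (Fin n) (Fin n) ℝ).submatrix id e := by rw [hWU, hWUT]
        _ = diagonal (fun a => muf X (e a)) := by
            ext a b
            simp only [Matrix.mul_apply, Matrix.submatrix_apply, id_eq, Matrix.one_apply,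
              Matrix.diagonal_apply, he_inj.eq_iff, ite_mul, one_mul, zero_mul, mul_ite,
              mul_one, mul_zero]
            simp [he_inj.eq_iff]
            by_cases hab : a = b <;> simp [hab]
    rw [hdiag, Matrix.det_diagonal, hprod]

private lemma rev_prod (f : Fin n → ℝ) (k : Fin n) :
    ∏ i ∈ Finset.Iic k, f i.rev = ∏ i ∈ Finset.Ici k.rev, f i := by
  apply Finset.prod_bij (fun (i : Fin n) (_ : i ∈ Finset.Iic k) => i.rev)
  · intro a ha
    rw [Finset.mem_Ici, Fin.rev_le_rev]
    exact Finset.mem_Iic.mp ha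
  · intro a _ b _ h
    have := congrArg Fin.rev h
    simpa using this
  · intro b hb
    refine ⟨b.rev, ?_, Fin.rev_rev b⟩
    rw [Finset.mem_Iic, ← Fin.rev_le_rev, Fin.rev_rev]
    exact Finset.mem_Ici.mp hb
  · intro a _
    rfl

private lemma gram_posdef {m : ℕ} (N : Matrix (Fin n) (Fin m) ℝ)
    (hinj : ∀ x : Fin m → ℝ, N *ᵥ x = 0 → x = 0) : (Nᴴ * N).PosDef := by
  refine Matrix.PosDef.of_dotProduct_mulVec_pos (Matrix.isHermitian_conjTranspose_mul_self N) (fun x hx => ?_)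
  rw [← Matrix.mulVec_mulVec, Matrix.dotProduct_mulVec, Matrix.vecMul_conjTranspose, star_star]
  set y := N *ᵥ x with hy
  have hyne : y ≠ 0 := fun h => hx (hinj x h)
  obtain ⟨i, hi⟩ := Function.ne_iff.mp hyne
  apply Finset.sum_pos'
  · intro j _
    simpa using mul_self_nonneg (y j)
  · refine ⟨i, Finset.mem_univ i, ?_⟩
    simpa using mul_self_pos.mpr hi

end HornAux

/-- Horn inequality: the product of the k largest singular values of A·B is at most the
product of the k largest singular values of A times that of B, for every k. -/
theorem horn_inequality {n : ℕ} (A B : Matrix (Fin n) (Fin n) ℝ)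
    (hA : IsUnit A.det) (hB : IsUnit B.det) :
    ∀ k : Fin n, ∏ i ∈ Finset.Iic k, svalDesc (A * B) i ≤
      ∏ i ∈ Finset.Iic k, (svalDesc A i * svalDesc B i) := by
  intro k
  set c : Fin n := k.rev with hc
  have hcard : (Finset.Ici c).card = (k : ℕ) + 1 := by
    rw [Fin.card_Ici]
    have h1 : (c : ℕ) = n - 1 - (k : ℕ) := by
      simp [hc, Fin.val_rev]
      omega
    have := k.isLt
    omega
  -- squared products of singular values
  have hsval : ∀ (X : Matrix (Fin n) (Fin n) ℝ) (i : Fin n),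
      svalDesc X i = Real.sqrt (muf X i.rev) := fun X i => rfl
  have hnonneg : ∀ X : Matrix (Fin n) (Fin n) ℝ,
      0 ≤ ∏ i ∈ Finset.Iic k, svalDesc X i :=
    fun X => Finset.prod_nonneg fun i _ => by rw [hsval]; exact Real.sqrt_nonneg _
  have hsq : ∀ X : Matrix (Fin n) (Fin n) ℝ,
      (∏ i ∈ Finset.Iic k, svalDesc X i) ^ 2 = ∏ i ∈ Finset.Ici c, muf X i := by
    intro X
    rw [← Finset.prod_pow]
    have h1 : ∀ i ∈ Finset.Iic k, svalDesc X i ^ 2 = muf X i.rev := by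
      intro i _
      rw [hsval]
      exact Real.sq_sqrt (muf_nonneg X i.rev)
    rw [Finset.prod_congr rfl h1, rev_prod]
  -- optimal frame for A*B
  obtain ⟨W, hW1, hW2⟩ := attain (A * B) ((k : ℕ) + 1) c hcard
  -- the Gram matrix of B*W
  set G : Matrix (Fin ((k : ℕ) + 1)) (Fin ((k : ℕ) + 1)) ℝ := (B * W)ᴴ * (B * W) with hGdef
  have hGpd : G.PosDef := by
    apply gram_posdef
    intro x hx0
    have h1 : B *ᵥ (W *ᵥ x) = 0 := by rwa [Matrix.mulVec_mulVec]
    have hBinj : Function.Injective B.mulVec :=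
      Matrix.mulVec_injective_iff_isUnit.mpr ((Matrix.isUnit_iff_isUnit_det B).mpr hB)
    have h2 : W *ᵥ x = 0 := by
      apply hBinj
      rw [h1, Matrix.mulVec_zero]
    have h3 : x = Wᴴ *ᵥ (W *ᵥ x) := by
      rw [Matrix.mulVec_mulVec, hW1, Matrix.one_mulVec]
    rw [h3, h2, Matrix.mulVec_zero]
  set S := (open scoped MatrixOrder in CFC.sqrt G) with hSdef
  have hSS : S * S = G := by
    open scoped MatrixOrder in exact CFC.sqrt_mul_sqrt_self G hGpd.posSemidef.nonneg
  have hSherm : Sᴴ = S := by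
    open scoped MatrixOrder in exact (CFC.sqrt_nonneg G).posSemidef.isHermitian
  have hdetS : IsUnit S.det := by
    rw [isUnit_iff_ne_zero]
    intro h0
    have : S.det * S.det = G.det := by rw [← Matrix.det_mul, hSS]
    rw [h0, mul_zero] at this
    exact absurd this.symm (ne_of_gt hGpd.det_pos)
  set Q := B * W * S⁻¹ with hQdef
  have hQS : Q * S = B * W := by
    rw [hQdef, Matrix.mul_assoc, Matrix.nonsing_inv_mul S hdetS, Matrix.mul_one]
  have hSinvH : S⁻¹ᴴ = S⁻¹ := by rw [Matrix.conjTranspose_nonsing_inv, hSherm]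
  have hQQ : Qᴴ * Q = 1 := by
    have h1 : Qᴴ * Q = S⁻¹ * ((B * W)ᴴ * (B * W)) * S⁻¹ := by
      rw [hQdef, Matrix.conjTranspose_mul, hSinvH]
      simp only [Matrix.mul_assoc]
    rw [h1, ← hGdef, ← hSS]
    calc S⁻¹ * (S * S) * S⁻¹ = S⁻¹ * S * (S * S⁻¹) := by simp only [Matrix.mul_assoc]
      _ = 1 := by
          rw [Matrix.nonsing_inv_mul S hdetS, Matrix.one_mul, Matrix.mul_nonsing_inv S hdetS]
  have hA2 : det (Qᴴ * (Aᴴ * A) * Q) ≤ (∏ i ∈ Finset.Iic k, svalDesc A i) ^ 2 := by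
    rw [hsq A]
    exact conj_bound A Q hQQ c hcard
  have hB2 : det G ≤ (∏ i ∈ Finset.Iic k, svalDesc B i) ^ 2 := by
    rw [hsq B]
    have hGW : G = Wᴴ * (Bᴴ * B) * W := by
      rw [hGdef, Matrix.conjTranspose_mul]
      simp only [Matrix.mul_assoc]
    rw [hGW]
    exact conj_bound B W hW1 c hcard
  have e1 : Wᴴ * ((A * B)ᴴ * (A * B)) * W = (B * W)ᴴ * (Aᴴ * A) * (B * W) := by
    rw [Matrix.conjTranspose_mul A B, Matrix.conjTranspose_mul B W]
    simp only [Matrix.mul_assoc]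
  have e2 : Sᴴ * (Qᴴ * (Aᴴ * A) * Q) * S = (B * W)ᴴ * (Aᴴ * A) * (B * W) := by
    conv_rhs => rw [← hQS]
    rw [Matrix.conjTranspose_mul Q S, hSherm]
    simp only [Matrix.mul_assoc]
  have det_eq : (∏ i ∈ Finset.Iic k, svalDesc (A * B) i) ^ 2
      = det G * det (Qᴴ * (Aᴴ * A) * Q) := by
    calc (∏ i ∈ Finset.Iic k, svalDesc (A * B) i) ^ 2
        = det (Wᴴ * ((A * B)ᴴ * (A * B)) * W) := by rw [hsq (A * B), hW2]
      _ = det (Sᴴ * (Qᴴ * (Aᴴ * A) * Q) * S) := by rw [e1, ← e2]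
      _ = det G * det (Qᴴ * (Aᴴ * A) * Q) := by
          rw [Matrix.det_mul, Matrix.det_mul, Matrix.det_conjTranspose, star_trivial,
            ← hSS, Matrix.det_mul]
          ring
  have step : det G * det (Qᴴ * (Aᴴ * A) * Q)
      ≤ (∏ i ∈ Finset.Iic k, svalDesc B i) ^ 2 * (∏ i ∈ Finset.Iic k, svalDesc A i) ^ 2 := by
    calc det G * det (Qᴴ * (Aᴴ * A) * Q)
        ≤ det G * (∏ i ∈ Finset.Iic k, svalDesc A i) ^ 2 :=
          mul_le_mul_of_nonneg_left hA2 hGpd.det_pos.le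
      _ ≤ (∏ i ∈ Finset.Iic k, svalDesc B i) ^ 2 * (∏ i ∈ Finset.Iic k, svalDesc A i) ^ 2 :=
          mul_le_mul_of_nonneg_right hB2 (sq_nonneg _)
  have final : (∏ i ∈ Finset.Iic k, svalDesc (A * B) i) ^ 2
      ≤ ((∏ i ∈ Finset.Iic k, svalDesc A i) * (∏ i ∈ Finset.Iic k, svalDesc B i)) ^ 2 := by
    rw [det_eq]
    calc det G * det (Qᴴ * (Aᴴ * A) * Q)
        ≤ (∏ i ∈ Finset.Iic k, svalDesc B i) ^ 2 * (∏ i ∈ Finset.Iic k, svalDesc A i) ^ 2 := step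
      _ = ((∏ i ∈ Finset.Iic k, svalDesc A i) * (∏ i ∈ Finset.Iic k, svalDesc B i)) ^ 2 := by
          ring
  have hfin := Real.sqrt_le_sqrt final
  rw [Real.sqrt_sq (hnonneg (A * B)),
    Real.sqrt_sq (mul_nonneg (hnonneg A) (hnonneg B))] at hfin
  rw [Finset.prod_mul_distrib]
  exact hfin
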